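/- Let α ≥ 2 be a countable ordinal and A ⊆ ω^{α+1} + 1. Then A ∈ conv_{α+1} if and only if (a) A ∩ (ω^α·n, ω^α·(n+1)] is finite for all but finitely many n, and (b) for every n, the derived set of A ∩ (ω^α·n, ω^α·(n+1)] is finite. -/

import Mathlib

open Set Filter Topology Ordinal

noncomputable section

/-- The derived set of `A`: the set of accumulation (limit) points of `A`. -/
def derivSet {X : Type*} [TopologicalSpace X] (A : Set X) : Set X :=
  {p | p ∈ closure (A \ {p})}

/-- The ordinal space `ω^a + 1 = [0, ω^a]` with the (order) topology. -/
abbrev OrdSpace (a : Ordinal) : Type _ := ↥(Set.Iic (omega0 ^ a))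

/-- The ideal `conv_a` on `ω^a + 1`: sets with finite derived set. -/
def convIdeal (a : Ordinal) : Set (Set (OrdSpace a)) :=
  {A | (derivSet A).Finite}

/-- `I` is an ideal of subsets. -/
structure IsIdeal {S : Type*} (I : Set (Set S)) : Prop where
  empty_mem : ∅ ∈ I
  subset_mem : ∀ {A B : Set S}, A ⊆ B → B ∈ I → A ∈ I
  union_mem : ∀ {A B : Set S}, A ∈ I → B ∈ I → A ∪ B ∈ I

/-- The subsequence of `f` indexed by `A` converges to `x`. -/
def ConvAlong {X : Type*} [TopologicalSpace X] (f : ℕ → X) (A : Set ℕ) (x : X) : Prop :=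
  ∀ U ∈ nhds x, {n ∈ A | f n ∉ U}.Finite

/-- Katětov order: `J ≤_K I`, where `I` lives on `X` and `J` on `Y`. -/
def KatetovLE {X Y : Type*} (J : Set (Set Y)) (I : Set (Set X)) : Prop :=
  ∃ f : X → Y, ∀ A ∈ J, f ⁻¹' A ∈ I

/-- `X ∈ FinBW(I)`: every sequence in `X` has a convergent subsequence indexed
by an `I`-positive set. -/
def InFinBW (I : Set (Set ℕ)) (X : Type*) [TopologicalSpace X] : Prop :=
  ∀ f : ℕ → X, ∃ A : Set ℕ, A ∉ I ∧ ∃ x : X, ConvAlong f A x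

/-- Characterization of `conv_{a+1}`: `A ∈ conv_{a+1}` iff all but finitely many of the
blocks `A ∩ (ω^a·n, ω^a·(n+1)]` are finite and every block has finite derived set. -/
lemma mem_closure_diff_iff_accPt {X : Type*} [TopologicalSpace X] {C : Set X} {x : X} :
    x ∈ closure (C \ {x}) ↔ AccPt x (𝓟 C) := by
  rw [mem_closure_iff_clusterPt, accPt_principal_iff_clusterPt]

lemma accPt_ordinal_iff {q : Ordinal} {S : Set Ordinal} :
    AccPt q (𝓟 S) ↔ q ≠ 0 ∧ ∀ p < q, (S ∩ Ioo p q).Nonempty :=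
  Ordinal.isAcc_iff q S

lemma image_derivSet {b : Ordinal} (A : Set ↥(Set.Iic b)) :
    Subtype.val '' derivSet A = {q : Ordinal | AccPt q (𝓟 (Subtype.val '' A))} := by
  ext q
  constructor
  · rintro ⟨p, hp, rfl⟩
    rw [derivSet, mem_setOf_eq, closure_subtype,
      image_diff Subtype.val_injective, image_singleton] at hp
    exact mem_closure_diff_iff_accPt.mp hp
  · intro hq
    obtain ⟨h0, hcf⟩ := accPt_ordinal_iff.mp hq
    have hqb : q ≤ b := by
      by_contra h
      push_neg at h
      obtain ⟨x, hxS, hx⟩ := hcf b h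
      obtain ⟨y, -, rfl⟩ := hxS
      exact absurd y.2 (not_le.mpr hx.1)
    refine ⟨⟨q, hqb⟩, ?_, rfl⟩
    rw [derivSet, mem_setOf_eq, closure_subtype,
      image_diff Subtype.val_injective, image_singleton]
    exact mem_closure_diff_iff_accPt.mpr hq

lemma derivSet_finite_iff {b : Ordinal} (A : Set ↥(Set.Iic b)) :
    (derivSet A).Finite ↔ {q : Ordinal | AccPt q (𝓟 (Subtype.val '' A))}.Finite := by
  rw [← image_derivSet]
  exact ⟨fun h => h.image _,
    fun h => Set.Finite.of_finite_image h Subtype.val_injective.injOn⟩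

lemma not_accPt_of_finite {X : Type*} [TopologicalSpace X] [T1Space X] {C : Set X}
    (h : C.Finite) (x : X) : ¬ AccPt x (𝓟 C) := by
  intro hx
  have h2 := mem_closure_diff_iff_accPt.mpr hx
  rw [(h.diff (t := _)).isClosed.closure_eq] at h2
  exact h2.2 rfl

lemma exists_accPt_of_infinite {T : Set Ordinal} {l u : Ordinal} (hT : T.Infinite)
    (hsub : T ⊆ Ioc l u) : ∃ q ∈ Ioc l u, AccPt q (𝓟 T) := by
  set M := {x : Ordinal | (T ∩ Iic x).Infinite} with hM
  have huM : u ∈ M := by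
    have : T ∩ Iic u = T := inter_eq_self_of_subset_left (fun x hx => (hsub hx).2)
    simpa [hM, this] using hT
  set q := sInf M with hq
  have hqM : q ∈ M := csInf_mem ⟨u, huM⟩
  have hmin : ∀ p < q, (T ∩ Iic p).Finite := by
    intro p hp
    by_contra h
    exact absurd (csInf_le (OrderBot.bddBelow M) (h : p ∈ M)) (not_le.mpr hp)
  have hlq : l < q := by
    by_contra h
    push_neg at h
    have hempty : T ∩ Iic q = ∅ := by
      ext x
      simp only [mem_inter_iff, mem_Iic, mem_empty_iff_false, iff_false, not_and]
      intro hxT hxq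
      exact absurd (hsub hxT).1 (not_lt.mpr (hxq.trans h))
    exact hqM (by rw [hempty]; exact finite_empty)
  refine ⟨q, ⟨hlq, csInf_le (OrderBot.bddBelow M) huM⟩, accPt_ordinal_iff.mpr ⟨?_, ?_⟩⟩
  · intro h0
    rw [h0] at hlq
    exact absurd hlq (zero_le (a := l)).not_gt
  · intro p hp
    by_contra h
    rw [Set.not_nonempty_iff_eq_empty] at h
    refine hqM (((hmin p hp).union (Set.finite_singleton q)).subset ?_)
    rintro x ⟨hxT, hxq⟩
    rcases le_or_gt x p with hxp | hpx
    · exact Or.inl ⟨hxT, hxp⟩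
    · rcases lt_or_eq_of_le (mem_Iic.mp hxq) with hxq' | rfl
      · have hmem : x ∈ T ∩ Ioo p q := ⟨hxT, hpx, hxq'⟩
        rw [h] at hmem
        exact hmem.elim
      · exact Or.inr rfl

lemma exists_block {w q : Ordinal} (h0 : q ≠ 0) (hq : q < w * omega0) :
    ∃ n : ℕ, w * n < q ∧ q ≤ w * ((n : Ordinal) + 1) := by
  classical
  obtain ⟨c, hc, hqc⟩ := (lt_mul_iff_of_isSuccLimit isSuccLimit_omega0).mp hq
  obtain ⟨m, rfl⟩ := lt_omega0.mp hc
  have hex : ∃ k : ℕ, q ≤ w * (k : Ordinal) := ⟨m, hqc.le⟩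
  set k := Nat.find hex with hk
  have hspec : q ≤ w * (k : Ordinal) := Nat.find_spec hex
  have hk0 : k ≠ 0 := by
    rintro hk0
    rw [hk0] at hspec
    simp only [Nat.cast_zero, mul_zero, nonpos_iff_eq_zero] at hspec
    exact h0 hspec
  obtain ⟨j, hj⟩ := Nat.exists_eq_succ_of_ne_zero hk0
  have hmin : ¬ q ≤ w * (j : Ordinal) := Nat.find_min hex (by omega)
  refine ⟨j, not_le.mp hmin, ?_⟩
  have : ((j : Ordinal) + 1) = ((k : ℕ) : Ordinal) := by rw [hj]; exact (Nat.cast_succ j).symm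
  rw [this]; exact hspec

theorem stmt4 (a : Ordinal) (ha : 2 ≤ a) (hac : a.card ≤ Cardinal.aleph0)
    (A : Set (OrdSpace (a + 1))) :
    A ∈ convIdeal (a + 1) ↔
      ((∀ᶠ n : ℕ in atTop,
          {x ∈ A | omega0 ^ a * (n : Ordinal) < (x : Ordinal) ∧
            (x : Ordinal) ≤ omega0 ^ a * ((n : Ordinal) + 1)}.Finite) ∧
       ∀ n : ℕ,
          (derivSet {x ∈ A | omega0 ^ a * (n : Ordinal) < (x : Ordinal) ∧
            (x : Ordinal) ≤ omega0 ^ a * ((n : Ordinal) + 1)}).Finite) := by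
  classical
  set w := omega0 ^ a with hw
  have hwo : omega0 ^ (a + 1) = w * omega0 := by
    rw [hw, Ordinal.add_one_eq_succ, opow_succ]
  set S := Subtype.val '' A with hS
  set T : ℕ → Set Ordinal := fun n => S ∩ Ioc (w * n) (w * ((n : Ordinal) + 1)) with hT
  have hSsub : ∀ x ∈ S, x ≤ w * omega0 := by
    rintro x ⟨y, -, rfl⟩
    exact hwo ▸ y.2
  have himg : ∀ n : ℕ, Subtype.val '' {x ∈ A | w * (n : Ordinal) < (x : Ordinal) ∧
      (x : Ordinal) ≤ w * ((n : Ordinal) + 1)} = T n := by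
    intro n; ext q
    constructor
    · rintro ⟨x, ⟨hxA, h1, h2⟩, rfl⟩; exact ⟨⟨x, hxA, rfl⟩, h1, h2⟩
    · rintro ⟨⟨x, hxA, rfl⟩, h1, h2⟩; exact ⟨x, ⟨hxA, h1, h2⟩, rfl⟩
  have hDT : ∀ n : ℕ, (derivSet {x ∈ A | w * (n : Ordinal) < (x : Ordinal) ∧
      (x : Ordinal) ≤ w * ((n : Ordinal) + 1)}).Finite ↔
      {q : Ordinal | AccPt q (𝓟 (T n))}.Finite := by
    intro n
    rw [derivSet_finite_iff, himg n]
  have hBT : ∀ n : ℕ, {x ∈ A | w * (n : Ordinal) < (x : Ordinal) ∧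
      (x : Ordinal) ≤ w * ((n : Ordinal) + 1)}.Finite ↔ (T n).Finite := by
    intro n
    rw [← himg n]
    exact ⟨fun h => h.image _,
      fun h => Set.Finite.of_finite_image h Subtype.val_injective.injOn⟩
  have hmemD : A ∈ convIdeal (a + 1) ↔ {q : Ordinal | AccPt q (𝓟 S)}.Finite := by
    rw [convIdeal, mem_setOf_eq]
    exact derivSet_finite_iff A
  rw [hmemD]
  constructor
  · intro hD
    refine ⟨?_, fun n => (hDT n).mpr
      (hD.subset fun q hq => hq.mono (principal_mono.mpr inter_subset_left))⟩
    by_contra hinf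
    rw [Filter.not_eventually] at hinf
    have hsub' : {n : ℕ | ¬ {x ∈ A | w * (n : Ordinal) < (x : Ordinal) ∧
        (x : Ordinal) ≤ w * ((n : Ordinal) + 1)}.Finite} ⊆ {n : ℕ | (T n).Infinite} :=
      fun n hn hfin => hn ((hBT n).mpr hfin)
    have hbad : {n : ℕ | (T n).Infinite}.Infinite :=
      Set.Infinite.mono hsub' (Nat.frequently_atTop_iff_infinite.mp hinf)
    have key : ∀ n : ℕ, (T n).Infinite →
        ∃ q ∈ Ioc (w * (n : Ordinal)) (w * ((n : Ordinal) + 1)), AccPt q (𝓟 (T n)) :=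
      fun n hn => exists_accPt_of_infinite hn inter_subset_right
    haveI : Infinite ↥{n : ℕ | (T n).Infinite} := hbad.to_subtype
    set f : ↥{n : ℕ | (T n).Infinite} → Ordinal :=
      fun n => (key (n : ℕ) n.2).choose with hf
    have hf1 : ∀ m : ↥{n : ℕ | (T n).Infinite},
        f m ∈ Ioc (w * ((m : ℕ) : Ordinal)) (w * (((m : ℕ) : Ordinal) + 1)) :=
      fun m => (key (m : ℕ) m.2).choose_spec.1
    have hf2 : ∀ m : ↥{n : ℕ | (T n).Infinite}, f m ∈ {q : Ordinal | AccPt q (𝓟 S)} :=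
      fun m => ((key (m : ℕ) m.2).choose_spec.2).mono (principal_mono.mpr inter_subset_left)
    have hdisj : ∀ n m : ↥{n : ℕ | (T n).Infinite}, (n : ℕ) < (m : ℕ) → f n ≠ f m := by
      intro n m hlt heq
      have h1 : f n ≤ w * (((n : ℕ) : Ordinal) + 1) := (hf1 n).2
      have h2 : w * (((m : ℕ) : Ordinal)) < f m := (hf1 m).1
      have hle : (((n : ℕ) : Ordinal) + 1) ≤ ((m : ℕ) : Ordinal) := by
        have h3 : ((n : ℕ) + 1 : ℕ) ≤ (m : ℕ) := hlt
        exact_mod_cast h3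
      have h4 : f m ≤ w * ((m : ℕ) : Ordinal) :=
        (heq ▸ h1).trans (mul_le_mul_right hle w)
      exact lt_irrefl _ (h2.trans_le h4)
    have hinj : Function.Injective f := by
      intro n m hnm
      rcases lt_trichotomy (n : ℕ) (m : ℕ) with h | h | h
      · exact absurd hnm (hdisj n m h)
      · exact Subtype.ext h
      · exact absurd hnm.symm (hdisj m n h)
    exact (Set.infinite_of_injective_forall_mem hinj hf2) hD
  · rintro ⟨hfin, hder⟩
    obtain ⟨N, hN⟩ := Filter.eventually_atTop.mp hfin
    have hNT : ∀ n : ℕ, N ≤ n → (T n).Finite := fun n hn => (hBT n).mp (hN n hn)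
    have hsub : {q : Ordinal | AccPt q (𝓟 S)} ⊆
        insert (w * omega0) (⋃ n ∈ Iic N, {q : Ordinal | AccPt q (𝓟 (T n))}) := by
      intro q hq
      obtain ⟨h0, hcf⟩ := accPt_ordinal_iff.mp hq
      have hqle : q ≤ w * omega0 := by
        by_contra h
        push_neg at h
        obtain ⟨x, hxS, hx⟩ := hcf _ h
        exact absurd (hSsub x hxS) (not_le.mpr hx.1)
      rcases eq_or_lt_of_le hqle with rfl | hqlt
      · exact mem_insert _ _
      obtain ⟨n, hn1, hn2⟩ := exists_block h0 hqlt
      have hqT : AccPt q (𝓟 (T n)) := by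
        refine accPt_ordinal_iff.mpr ⟨h0, fun p hp => ?_⟩
        obtain ⟨x, hxS, hx1, hx2⟩ := hcf (max p (w * n)) (max_lt hp hn1)
        exact ⟨x, ⟨hxS, lt_of_le_of_lt (le_max_right _ _) hx1, (le_of_lt hx2).trans hn2⟩,
          lt_of_le_of_lt (le_max_left _ _) hx1, hx2⟩
      have hnN : n ≤ N := by
        by_contra hn
        exact not_accPt_of_finite (hNT n (le_of_lt (not_le.mp hn))) q hqT
      exact Set.mem_insert_iff.mpr (Or.inr (mem_biUnion hnN hqT))
    exact Set.Finite.subset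
      (((Set.finite_Iic N).biUnion (fun n _ => (hDT n).mp (hder n))).insert _) hsub
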